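/- Let V be a Euclidean space of dimension 2n and let R be an algebraic curvature tensor on V. If ‖R - g⊘g‖_∞ ≤ 1/(2n), where g⊘g is the Kulkarni–Nomizu square of the metric ((g⊘g)(X,Y,Z,T) = g(X,Z)g(Y,T) - g(X,T)g(Y,Z)) and ‖R‖_∞ = max over unit vectors of |R(v₁,v₂,v₃,v₄)|, then for every orthogonal complex structure J on V and every X ∈ V, the holomorphic Ricci curvature Ric*_R(X,X) = ∑ᵢ R(X, eᵢ, JX, Jeᵢ) is nonnegative, where {eᵢ} is any orthonormal basis of V. -/
import Mathlib


open scoped RealInnerProductSpace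

/-- If an algebraic curvature tensor `R` on a `2n`-dimensional Euclidean space
satisfies `‖R - g⊘g‖_∞ ≤ 1/(2n)` (sup over unit vectors), then for every orthogonal complex
structure `J` and every `X`, the holomorphic Ricci curvature
`Ric*_R(X,X) = ∑ᵢ R(X, eᵢ, JX, Jeᵢ)` is nonnegative. -/
theorem star_ricci_nonneg_of_close_to_constant_curvature {V : Type*} [NormedAddCommGroup V]
    [InnerProductSpace ℝ V] [FiniteDimensional ℝ V] (n : ℕ)
    (hdim : Module.finrank ℝ V = 2 * n)
    (R : V →ₗ[ℝ] V →ₗ[ℝ] V →ₗ[ℝ] V →ₗ[ℝ] ℝ)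
    (hR1 : ∀ x y z t, R x y z t = - R y x z t)
    (hR3 : ∀ x y z t, R x y z t = R z t x y)
    (hBianchi : ∀ x y z t, R x y z t + R y z x t + R z x y t = 0)
    (hbound : ∀ v₁ v₂ v₃ v₄ : V, ‖v₁‖ = 1 → ‖v₂‖ = 1 → ‖v₃‖ = 1 → ‖v₄‖ = 1 →
      |R v₁ v₂ v₃ v₄ - (⟪v₁, v₃⟫ * ⟪v₂, v₄⟫ - ⟪v₁, v₄⟫ * ⟪v₂, v₃⟫)| ≤ 1 / (2 * n))
    (J : V →ₗ[ℝ] V) (hJ2 : ∀ x, J (J x) = -x) (hJo : ∀ x y, ⟪J x, J y⟫ = ⟪x, y⟫)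
    (b : OrthonormalBasis (Fin (2 * n)) ℝ V) (X : V) :
    0 ≤ ∑ i, R X (b i) (J X) (J (b i)) := by
  rcases eq_or_ne X 0 with hX | hX
  · simp [hX]
  -- n > 0 since V contains a nonzero vector
  have hn : 0 < n := by
    rcases Nat.eq_zero_or_pos n with h | h
    · exfalso
      have : Module.finrank ℝ V = 0 := by rw [hdim, h]
      have := Module.finrank_zero_iff.mp this
      exact hX (Subsingleton.elim X 0)
    · exact h
  have hJnorm : ∀ x : V, ‖J x‖ = ‖x‖ := by
    intro x
    have h1 : ⟪J x, J x⟫ = ⟪x, x⟫ := hJo x x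
    rw [real_inner_self_eq_norm_sq, real_inner_self_eq_norm_sq] at h1
    have h2 := congrArg Real.sqrt h1
    simpa [Real.sqrt_sq, norm_nonneg] using h2
  have hJneg : ∀ x y : V, ⟪x, J y⟫ = -⟪J x, y⟫ := by
    intro x y
    have := hJo x (J y)
    rw [hJ2 y] at this
    rw [← this, inner_neg_right]
  have hxJx : ∀ x : V, ⟪x, J x⟫ = 0 := by
    intro x
    have h1 := hJneg x x
    have h2 := real_inner_comm x (J x)
    linarith
  set c : ℝ := ‖X‖ with hc
  have hc0 : c ≠ 0 := norm_ne_zero_iff.mpr hX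
  set u : V := c⁻¹ • X with hu
  have hunorm : ‖u‖ = 1 := norm_smul_inv_norm hX
  have hXcu : X = c • u := by
    rw [hu, smul_smul, mul_inv_cancel₀ hc0, one_smul]
  -- each term equals c^2 * R u (b i) (J u) (J (b i))
  have hterm : ∀ i, R X (b i) (J X) (J (b i)) = c^2 * R u (b i) (J u) (J (b i)) := by
    intro i
    rw [hXcu]
    simp [map_smul, smul_eq_mul]
    ring
  rw [Finset.sum_congr rfl fun i _ => hterm i, ← Finset.mul_sum]
  have hsum : (1 : ℝ) - 1 ≤ ∑ i, R u (b i) (J u) (J (b i)) := by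
    have key : ∀ i, ⟪J u, b i⟫ * ⟪b i, J u⟫ - 1 / (2 * n) ≤ R u (b i) (J u) (J (b i)) := by
      intro i
      have hb : ‖b i‖ = 1 := b.orthonormal.1 i
      have hJb : ‖J (b i)‖ = 1 := by rw [hJnorm]; exact hb
      have := hbound u (b i) (J u) (J (b i)) hunorm hb (by rw [hJnorm]; exact hunorm) hJb
      have habs := abs_le.mp this
      have h1 : ⟪u, J u⟫ = 0 := hxJx u
      have h2 : ⟪u, J (b i)⟫ = -⟪J u, b i⟫ := hJneg u (b i)
      rw [h1, h2] at habs
      nlinarith [habs.1]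
    have hn' : (n:ℝ) ≠ 0 := Nat.cast_ne_zero.mpr hn.ne'
    have hsum1 : ∑ _i : Fin (2*n), (1 / (2 * (n:ℝ))) = 1 := by
      rw [Finset.sum_const, Finset.card_univ, Fintype.card_fin, nsmul_eq_mul]
      push_cast
      field_simp
    calc (1:ℝ) - 1
        = (∑ i, ⟪J u, b i⟫ * ⟪b i, J u⟫) - ∑ _i : Fin (2*n), 1 / (2 * (n:ℝ)) := by
          rw [b.sum_inner_mul_inner (J u) (J u), real_inner_self_eq_norm_sq, hJnorm, hunorm,
            hsum1]
          norm_num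
      _ = ∑ i, (⟪J u, b i⟫ * ⟪b i, J u⟫ - 1 / (2 * n)) := by rw [Finset.sum_sub_distrib]
      _ ≤ ∑ i, R u (b i) (J u) (J (b i)) := Finset.sum_le_sum fun i _ => key i
  have : (0:ℝ) ≤ ∑ i, R u (b i) (J u) (J (b i)) := by linarith
  positivity
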